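/- For every d ≥ 2, the number of minimal permutations with d descents and of size d+2 is exactly twice the number of non-interval subsets of {1, 2, ..., d+1}. -/

import Mathlib

set_option maxHeartbeats 1600000


/-- `σ` has a descent at (0-based) position `i`, i.e. `σ i > σ (i+1)`. -/
def IsDescentAt {n : ℕ} (σ : Equiv.Perm (Fin n)) (i : ℕ) : Prop :=
  ∃ h : i + 1 < n, σ ⟨i + 1, h⟩ < σ ⟨i, Nat.lt_of_succ_lt h⟩

/-- The number of descents of `σ`. -/
noncomputable def descNum {n : ℕ} (σ : Equiv.Perm (Fin n)) : ℕ :=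
  {i : ℕ | IsDescentAt σ i}.ncard

/-- `π` is a pattern of `σ` (written `π ≺ σ`). -/
def IsPattern {k n : ℕ} (π : Equiv.Perm (Fin k)) (σ : Equiv.Perm (Fin n)) : Prop :=
  ∃ f : Fin k ↪o Fin n, ∀ ℓ m : Fin k, π ℓ < π m → σ (f ℓ) < σ (f m)

/-- `σ` is a minimal permutation with `d` descents: it has `d` descents and every
pattern `π ≺ σ` with `π ≠ σ` (equivalently, of strictly smaller size) has fewer
than `d` descents. -/
def MinimalWithDescents (d : ℕ) {n : ℕ} (σ : Equiv.Perm (Fin n)) : Prop :=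
  descNum σ = d ∧
    ∀ (k : ℕ) (π : Equiv.Perm (Fin k)), k < n → IsPattern π σ → descNum π < d

namespace MinPerm

open Finset
open scoped Classical

variable {n : ℕ}

noncomputable def descFinset (σ : Equiv.Perm (Fin n)) : Finset ℕ :=
  (Finset.range (n - 1)).filter (fun i => IsDescentAt σ i)

lemma descNum_eq (σ : Equiv.Perm (Fin n)) : descNum σ = (descFinset σ).card := by
  rw [descNum, ← Set.ncard_coe_finset]
  congr 1
  ext i
  simp only [descFinset, coe_filter, mem_range, Set.mem_setOf_eq, mem_coe]
  constructor
  · intro h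
    exact ⟨by obtain ⟨hh, -⟩ := h; omega, h⟩
  · exact fun h => h.2

lemma descent_lt {σ : Equiv.Perm (Fin n)} {i : ℕ} (h : IsDescentAt σ i) (hh : i + 1 < n) :
    σ ⟨i + 1, hh⟩ < σ ⟨i, Nat.lt_of_succ_lt hh⟩ := by
  obtain ⟨h', hs⟩ := h
  exact hs

lemma ascent_lt {σ : Equiv.Perm (Fin n)} {i : ℕ} (h : ¬ IsDescentAt σ i) (hh : i + 1 < n) :
    σ ⟨i, Nat.lt_of_succ_lt hh⟩ < σ ⟨i + 1, hh⟩ := by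
  rcases lt_trichotomy (σ ⟨i, Nat.lt_of_succ_lt hh⟩) (σ ⟨i + 1, hh⟩) with h1 | h1 | h1
  · exact h1
  · exact absurd (σ.injective h1) (by simp [Fin.ext_iff])
  · exact absurd ⟨hh, h1⟩ h

lemma descNum_le (σ : Equiv.Perm (Fin n)) : descNum σ ≤ n - 1 := by
  rw [descNum_eq]
  exact le_trans (card_filter_le _ _) (by simp)

lemma anti_block {σ : Equiv.Perm (Fin n)} {lo hi : ℕ}
    (h : ∀ i, lo ≤ i → i + 1 ≤ hi → IsDescentAt σ i) :
    ∀ (j : ℕ) (q p : Fin n), (q : ℕ) = j → lo ≤ (p : ℕ) → p < q → (q : ℕ) ≤ hi → σ q < σ p := by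
  intro j
  induction j with
  | zero => intro q p hq hp hpq hqhi; omega
  | succ j ih =>
    intro q p hq hp hpq hqhi
    have hpq' : (p : ℕ) < (q : ℕ) := hpq
    have hpj : (p : ℕ) ≤ j := by omega
    have hjn : j + 1 < n := by omega
    have hd : IsDescentAt σ j := h j (by omega) (by omega)
    have hq' : q = ⟨j + 1, hjn⟩ := Fin.ext hq
    have hlt : σ q < σ ⟨j, Nat.lt_of_succ_lt hjn⟩ := by
      rw [hq']; exact descent_lt hd hjn
    rcases eq_or_lt_of_le hpj with h1 | h1
    · have : p = ⟨j, Nat.lt_of_succ_lt hjn⟩ := Fin.ext h1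
      rw [this]; exact hlt
    · refine lt_trans hlt (ih ⟨j, Nat.lt_of_succ_lt hjn⟩ p rfl hp ?_ ?_)
      · show (p : ℕ) < j
        omega
      · show j ≤ hi
        omega

/-- If all positions are descents then σ is strictly decreasing. -/
lemma anti_all {σ : Equiv.Perm (Fin n)} (h : ∀ i, i + 1 < n → IsDescentAt σ i)
    {p q : Fin n} (hpq : p < q) : σ q < σ p := by
  refine anti_block (lo := 0) (hi := n - 1) (fun i _ hi => h i (by omega)) q q p rfl
    (by omega) hpq (by omega)

lemma descNum_eq_sub_one_iff {σ : Equiv.Perm (Fin n)} :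
    descNum σ = n - 1 ↔ ∀ i, i + 1 < n → IsDescentAt σ i := by
  rw [descNum_eq, descFinset]
  constructor
  · intro h i hi
    have h2 : ((Finset.range (n - 1)).filter (fun i => IsDescentAt σ i)) = Finset.range (n - 1) :=
      eq_of_subset_of_card_le (filter_subset _ _) (by rw [h, card_range])
    have : i ∈ Finset.range (n - 1) := by simp; omega
    rw [← h2] at this
    exact (mem_filter.1 this).2
  · intro h
    rw [filter_true_of_mem (fun i hi => h i (by simp at hi; omega)), card_range]

lemma descNum_revPerm (k : ℕ) : descNum (Fin.revPerm : Equiv.Perm (Fin k)) = k - 1 := by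
  rw [descNum_eq_sub_one_iff]
  intro i hi
  exact ⟨hi, by simp [Fin.lt_def, Fin.rev]; omega⟩



def HasAntiEmb (d : ℕ) (σ : Equiv.Perm (Fin (d + 2))) : Prop :=
  ∃ f : Fin (d + 1) ↪o Fin (d + 2), ∀ p q : Fin (d + 1), p < q → σ (f q) < σ (f p)

lemma minimal_iff {d : ℕ} (hd : 2 ≤ d) (σ : Equiv.Perm (Fin (d + 2))) :
    MinimalWithDescents d σ ↔ descNum σ = d ∧ ¬ HasAntiEmb d σ := by
  constructor
  · rintro ⟨h1, h2⟩
    refine ⟨h1, ?_⟩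
    rintro ⟨f, hf⟩
    have hpat : IsPattern (Fin.revPerm : Equiv.Perm (Fin (d + 1))) σ := by
      refine ⟨f, fun ℓ m hlm => ?_⟩
      simp only [Fin.revPerm_apply, Fin.rev_lt_rev] at hlm
      exact hf m ℓ hlm
    have := h2 (d + 1) Fin.revPerm (by omega) hpat
    rw [descNum_revPerm] at this
    omega
  · rintro ⟨h1, h2⟩
    refine ⟨h1, fun k π hk hpat => ?_⟩
    rcases Nat.lt_or_ge k (d + 1) with hk' | hk'
    · have := descNum_le π
      omega
    · have hkd : k = d + 1 := by omega
      subst hkd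
      by_contra hcon
      push_neg at hcon
      have heq : descNum π = d := le_antisymm (by simpa using descNum_le π) hcon
      have hall : ∀ i, i + 1 < d + 1 → IsDescentAt π i :=
        descNum_eq_sub_one_iff.1 (by simpa using heq)
      obtain ⟨f, hf⟩ := hpat
      exact h2 ⟨f, fun p q hpq => hf q p (anti_all hall hpq)⟩



variable {nn : Unit}
lemma card_compl_fin (S : Finset (Fin n)) : Sᶜ.card = n - S.card := by
  rw [card_compl, Fintype.card_fin]

noncomputable def phiFun (S : Finset (Fin n)) : Fin n → Fin n := fun p =>
  if h : (p : ℕ) < S.card then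
    S.orderEmbOfFin rfl ⟨S.card - 1 - (p : ℕ), by omega⟩
  else
    Sᶜ.orderEmbOfFin (card_compl_fin S) ⟨n - 1 - (p : ℕ), by have := p.isLt; omega⟩

lemma phiFun_left {S : Finset (Fin n)} {p : Fin n} (h : (p : ℕ) < S.card) :
    phiFun S p = S.orderEmbOfFin rfl ⟨S.card - 1 - (p : ℕ), by omega⟩ := by
  rw [phiFun, dif_pos h]

lemma phiFun_right {S : Finset (Fin n)} {p : Fin n} (h : ¬ (p : ℕ) < S.card) :
    phiFun S p = Sᶜ.orderEmbOfFin (card_compl_fin S) ⟨n - 1 - (p : ℕ),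
      by have := p.isLt; omega⟩ := by
  rw [phiFun, dif_neg h]

lemma phiFun_mem_left {S : Finset (Fin n)} {p : Fin n} (h : (p : ℕ) < S.card) :
    phiFun S p ∈ S := by
  rw [phiFun_left h]; exact orderEmbOfFin_mem _ _ _

lemma phiFun_mem_right {S : Finset (Fin n)} {p : Fin n} (h : ¬ (p : ℕ) < S.card) :
    phiFun S p ∈ Sᶜ := by
  rw [phiFun_right h]; exact orderEmbOfFin_mem _ _ _

lemma phiFun_injective (S : Finset (Fin n)) : Function.Injective (phiFun S) := by
  intro p q hpq
  by_cases hp : (p : ℕ) < S.card <;> by_cases hq : (q : ℕ) < S.card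
  · rw [phiFun_left hp, phiFun_left hq] at hpq
    have := (S.orderEmbOfFin rfl).injective hpq
    have := Fin.mk.injEq .. ▸ this
    apply Fin.ext
    omega
  · exact absurd (phiFun_mem_right hq) (by rw [← hpq]; simpa using phiFun_mem_left hp)
  · exact absurd (phiFun_mem_right hp) (by rw [hpq]; simpa using phiFun_mem_left hq)
  · rw [phiFun_right hp, phiFun_right hq] at hpq
    have := (Sᶜ.orderEmbOfFin (card_compl_fin S)).injective hpq
    simp only [Fin.mk.injEq] at this
    apply Fin.ext
    have hp' := p.isLt
    have hq' := q.isLt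
    omega

noncomputable def Phi (S : Finset (Fin n)) : Equiv.Perm (Fin n) :=
  Equiv.ofBijective (phiFun S) ((Finite.injective_iff_bijective).1 (phiFun_injective S))

lemma Phi_apply (S : Finset (Fin n)) (p : Fin n) : Phi S p = phiFun S p := rfl

lemma phi_left_lt {S : Finset (Fin n)} {p q : Fin n} (hq : (q : ℕ) < S.card) (h : p < q) :
    Phi S q < Phi S p := by
  have hp : (p : ℕ) < S.card := lt_trans h hq
  rw [Phi_apply, Phi_apply, phiFun_left hp, phiFun_left hq]
  apply (S.orderEmbOfFin rfl).strictMono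
  have : (p : ℕ) < (q : ℕ) := h
  simp only [Fin.mk_lt_mk]
  omega

lemma phi_right_lt {S : Finset (Fin n)} {p q : Fin n} (hp : S.card ≤ (p : ℕ)) (h : p < q) :
    Phi S q < Phi S p := by
  have hq : S.card ≤ (q : ℕ) := le_trans hp (le_of_lt h)
  rw [Phi_apply, Phi_apply, phiFun_right (by omega), phiFun_right (by omega)]
  apply (Sᶜ.orderEmbOfFin (card_compl_fin S)).strictMono
  have : (p : ℕ) < (q : ℕ) := h
  have := q.isLt
  simp only [Fin.mk_lt_mk]
  omega

lemma phi_descent {S : Finset (Fin n)} {i : ℕ} (hi : i + 1 < n) (hk : i + 1 ≠ S.card) :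
    IsDescentAt (Phi S) i := by
  refine ⟨hi, ?_⟩
  rcases Nat.lt_or_ge (i + 1) S.card with h | h
  · exact phi_left_lt (by simpa using h) (by simp [Fin.lt_def])
  · have : S.card ≤ i := by omega
    exact phi_right_lt (by simpa using this) (by simp [Fin.lt_def])

/-- every element of `S` is reached by the order embedding. -/
lemma exists_orderEmbOfFin {S : Finset (Fin n)} {k : ℕ} (h : S.card = k) {a : Fin n}
    (ha : a ∈ S) : ∃ j : Fin k, S.orderEmbOfFin h j = a := by
  have : a ∈ Set.range (S.orderEmbOfFin h) := by rw [range_orderEmbOfFin]; exact ha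
  exact this

def OneAsc (σ : Equiv.Perm (Fin n)) (i : ℕ) : Prop :=
  i + 1 < n ∧ ¬ IsDescentAt σ i ∧ ∀ j, j + 1 < n → j ≠ i → IsDescentAt σ j

lemma descNum_eq_oneAsc {σ : Equiv.Perm (Fin n)} (hn : 2 ≤ n) :
    descNum σ = n - 2 ↔ ∃ i, OneAsc σ i := by
  rw [descNum_eq, descFinset]
  constructor
  · intro h
    have hsum := card_filter_add_card_filter_not
      (s := Finset.range (n - 1)) (p := fun i => IsDescentAt σ i)
    beta_reduce at hsum
    rw [h, card_range] at hsum
    have h1 : ((Finset.range (n - 1)).filter (fun i => ¬ IsDescentAt σ i)).card = 1 := by omega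
    obtain ⟨i, hi⟩ := card_eq_one.1 h1
    have hmem : i ∈ (Finset.range (n - 1)).filter (fun i => ¬ IsDescentAt σ i) := by
      rw [hi]; exact mem_singleton_self i
    simp only [mem_filter, mem_range] at hmem
    refine ⟨i, by omega, hmem.2, fun j hj hji => ?_⟩
    by_contra hcon
    have : j ∈ (Finset.range (n - 1)).filter (fun i => ¬ IsDescentAt σ i) := by
      simp only [mem_filter, mem_range]; exact ⟨by omega, hcon⟩
    rw [hi, mem_singleton] at this
    exact hji this
  · rintro ⟨i, hi1, hi2, hi3⟩
    have : (Finset.range (n - 1)).filter (fun j => IsDescentAt σ j) =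
        (Finset.range (n - 1)).erase i := by
      ext j
      simp only [mem_filter, mem_range, mem_erase]
      constructor
      · rintro ⟨hj, hdesc⟩
        exact ⟨fun hji => hi2 (hji ▸ hdesc), hj⟩
      · rintro ⟨hji, hj⟩
        exact ⟨hj, hi3 j (by omega) hji⟩
    rw [this, card_erase_of_mem (by simp; omega), card_range]
    omega

end MinPerm


namespace MinPerm4
open Finset MinPerm
open scoped Classical

variable {n : ℕ}

lemma filter_le_card {i : ℕ} (hi : i < n) :
    (univ.filter (fun p : Fin n => (p : ℕ) ≤ i)).card = i + 1 := by
  have : univ.filter (fun p : Fin n => (p : ℕ) ≤ i) = Finset.Iic ⟨i, hi⟩ := by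
    ext p; simp [Fin.le_def]
  rw [this, Fin.card_Iic]

lemma compl_image (σ : Equiv.Perm (Fin n)) (i : ℕ) :
    ((univ.filter (fun p : Fin n => (p : ℕ) ≤ i)).image σ)ᶜ =
      (univ.filter (fun p : Fin n => i < (p : ℕ))).image σ := by
  ext v
  simp only [mem_compl, mem_image, mem_filter, mem_univ, true_and]
  constructor
  · intro hv
    obtain ⟨p, rfl⟩ : ∃ p, σ p = v := ⟨σ.symm v, by simp⟩
    refine ⟨p, ?_, rfl⟩
    by_contra hcon
    push_neg at hcon
    exact hv ⟨p, by omega, rfl⟩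
  · rintro ⟨p, hp, rfl⟩ ⟨q, hq, hqp⟩
    cases σ.injective hqp
    omega

lemma eq_phi_of_oneAsc {σ : Equiv.Perm (Fin n)} {i : ℕ} (h : OneAsc σ i) :
    ((univ.filter (fun p : Fin n => (p : ℕ) ≤ i)).image σ).card = i + 1 ∧
    σ = Phi ((univ.filter (fun p : Fin n => (p : ℕ) ≤ i)).image σ) := by
  obtain ⟨hin, -, hdesc⟩ := h
  set S := (univ.filter (fun p : Fin n => (p : ℕ) ≤ i)).image σ with hS
  have hi : i < n := by omega
  have hcard : S.card = i + 1 := by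
    rw [hS, card_image_of_injective _ σ.injective, filter_le_card hi]
  have hanti1 : ∀ p q : Fin n, p < q → (q : ℕ) ≤ i → σ q < σ p := by
    intro p q hpq hq
    exact anti_block (lo := 0) (hi := i)
      (fun j hj hji => hdesc j (by omega) (by omega)) (q : ℕ) q p rfl (by omega) hpq hq
  have hanti2 : ∀ p q : Fin n, i + 1 ≤ (p : ℕ) → p < q → σ q < σ p := by
    intro p q hp hpq
    exact anti_block (lo := i + 1) (hi := n - 1)
      (fun j hj hj2 => hdesc j (by omega) (by omega)) (q : ℕ) q p rfl hp hpq (by omega)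
  refine ⟨hcard, Equiv.ext fun p => ?_⟩
  have hFeq : (fun a : Fin (i + 1) => σ ⟨i - (a : ℕ), by omega⟩) = S.orderEmbOfFin hcard := by
    apply orderEmbOfFin_unique hcard
    · intro a
      exact mem_image.2 ⟨⟨i - (a : ℕ), by omega⟩, by simp, rfl⟩
    · intro a b hab
      have hab' : (a : ℕ) < (b : ℕ) := hab
      have hb := b.isLt
      exact hanti1 _ _ (show (⟨i - (b : ℕ), _⟩ : Fin n) < ⟨i - (a : ℕ), _⟩ from by
        simp only [Fin.mk_lt_mk]; omega) (Nat.sub_le _ _)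
  have hGeq : (fun a : Fin (n - (i + 1)) => σ ⟨n - 1 - (a : ℕ), by omega⟩) =
      Sᶜ.orderEmbOfFin (by rw [card_compl_fin, hcard]) := by
    apply orderEmbOfFin_unique
    · intro a
      have hc : Sᶜ = (univ.filter (fun p : Fin n => i < (p : ℕ))).image σ := by
        rw [hS]; exact compl_image σ i
      rw [hc]
      have ha := a.isLt
      exact mem_image.2 ⟨⟨n - 1 - (a : ℕ), by omega⟩, by simp; omega, rfl⟩
    · intro a b hab
      have hab' : (a : ℕ) < (b : ℕ) := hab
      have hb := b.isLt
      exact hanti2 _ _ (by simp; omega) (show (⟨n - 1 - (b : ℕ), _⟩ : Fin n) <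
        ⟨n - 1 - (a : ℕ), _⟩ from by simp only [Fin.mk_lt_mk]; omega)
  rcases Nat.lt_or_ge (p : ℕ) (i + 1) with hp | hp
  · rw [Phi_apply, phiFun_left (by omega : (p : ℕ) < S.card)]
    have h1 : σ p = S.orderEmbOfFin hcard ⟨i - (p : ℕ), by omega⟩ := by
      rw [← hFeq]
      exact congrArg σ (Fin.ext (show (p : ℕ) = i - (i - (p : ℕ)) by omega))
    rw [h1, orderEmbOfFin_eq_orderEmbOfFin_iff]
    show i - (p : ℕ) = S.card - 1 - (p : ℕ)
    omega
  · rw [Phi_apply, phiFun_right (by omega : ¬ (p : ℕ) < S.card)]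
    have hpn := p.isLt
    have h1 : σ p = Sᶜ.orderEmbOfFin (by rw [card_compl_fin, hcard])
        ⟨n - 1 - (p : ℕ), by omega⟩ := by
      rw [← hGeq]
      exact congrArg σ (Fin.ext (show (p : ℕ) = n - 1 - (n - 1 - (p : ℕ)) by omega))
    rw [h1, orderEmbOfFin_eq_orderEmbOfFin_iff]

end MinPerm4


namespace MinPerm5
open Finset MinPerm MinPerm4
open scoped Classical

variable {n : ℕ}

def Cond1 (S : Finset (Fin n)) : Prop :=
  ∃ a ∈ S, ∃ b ∈ Sᶜ, a < b ∧ ∃ a' ∈ S, a' < a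

def Cond2 (S : Finset (Fin n)) : Prop :=
  ∃ a ∈ S, ∃ b ∈ Sᶜ, a < b ∧ ∃ b' ∈ Sᶜ, b < b'

noncomputable def Good (n : ℕ) : Finset (Finset (Fin n)) :=
  univ.filter (fun S => 2 ≤ S.card ∧ S.card ≤ n - 2 ∧ Cond1 S ∧ Cond2 S)

lemma phi_le_of_mem {S : Finset (Fin n)} {a : Fin n} (ha : a ∈ S) {p : Fin n}
    (hp : (p : ℕ) = S.card - 1) : Phi S p ≤ a := by
  have hP : 0 < S.card := card_pos.2 ⟨a, ha⟩
  rw [Phi_apply, phiFun_left (by omega)]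
  obtain ⟨ja, rfl⟩ := exists_orderEmbOfFin rfl ha
  exact (S.orderEmbOfFin rfl).monotone (by simp only [Fin.le_def]; omega)

lemma phi_le_of_mem' {S : Finset (Fin n)} {a a' : Fin n} (ha : a ∈ S) (ha' : a' ∈ S)
    (haa : a' < a) {p : Fin n} (hp : (p : ℕ) = S.card - 2) (h2 : 2 ≤ S.card) :
    Phi S p ≤ a := by
  rw [Phi_apply, phiFun_left (by omega)]
  obtain ⟨ja, rfl⟩ := exists_orderEmbOfFin rfl ha
  obtain ⟨ja', rfl⟩ := exists_orderEmbOfFin rfl ha'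
  have hja : (ja' : ℕ) < (ja : ℕ) := (S.orderEmbOfFin rfl).lt_iff_lt.1 haa
  exact (S.orderEmbOfFin rfl).monotone (by simp only [Fin.le_def]; omega)

lemma le_phi_of_mem_compl {S : Finset (Fin n)} {b : Fin n} (hb : b ∈ Sᶜ) {p : Fin n}
    (hp : (p : ℕ) = S.card) : b ≤ Phi S p := by
  rw [Phi_apply, phiFun_right (by omega)]
  obtain ⟨jb, rfl⟩ := exists_orderEmbOfFin (card_compl_fin S) hb
  have := jb.isLt
  have := p.isLt
  exact (Sᶜ.orderEmbOfFin (card_compl_fin S)).monotone (by simp only [Fin.le_def]; omega)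

lemma le_phi_of_mem_compl' {S : Finset (Fin n)} {b b' : Fin n} (hb : b ∈ Sᶜ) (hb' : b' ∈ Sᶜ)
    (hbb : b < b') {p : Fin n} (hp : (p : ℕ) = S.card + 1) : b ≤ Phi S p := by
  rw [Phi_apply, phiFun_right (by omega)]
  obtain ⟨jb, rfl⟩ := exists_orderEmbOfFin (card_compl_fin S) hb
  obtain ⟨jb', rfl⟩ := exists_orderEmbOfFin (card_compl_fin S) hb'
  have hjb : (jb : ℕ) < (jb' : ℕ) := (Sᶜ.orderEmbOfFin (card_compl_fin S)).lt_iff_lt.1 hbb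
  have := jb'.isLt
  have := p.isLt
  exact (Sᶜ.orderEmbOfFin (card_compl_fin S)).monotone (by simp only [Fin.le_def]; omega)

lemma mem_ne_compl {S : Finset (Fin n)} {a b : Fin n} (ha : a ∈ S) (hb : b ∈ Sᶜ) : a ≠ b := by
  intro h
  rw [h] at ha
  exact (mem_compl.1 hb) ha

lemma oneAsc_phi {S : Finset (Fin n)} (h1 : 1 ≤ S.card) (h2 : S.card ≤ n - 1)
    (h3 : ∃ a ∈ S, ∃ b ∈ Sᶜ, a < b) : OneAsc (Phi S) (S.card - 1) := by
  obtain ⟨a, ha, b, hb, hab⟩ := h3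
  have hn : 1 ≤ n := by have := a.isLt; omega
  have hkn : S.card - 1 + 1 < n := by omega
  have hasc : Phi S ⟨S.card - 1, by omega⟩ < Phi S ⟨S.card - 1 + 1, hkn⟩ :=
    lt_of_le_of_lt (phi_le_of_mem ha rfl)
      (lt_of_lt_of_le hab (le_phi_of_mem_compl hb (show S.card - 1 + 1 = S.card by omega)))
  refine ⟨hkn, ?_, fun j hj hji => phi_descent hj (by omega)⟩
  rintro ⟨hh, hlt⟩
  exact lt_asymm hasc hlt

lemma phi_minimal {d : ℕ} (hd : 2 ≤ d) {S : Finset (Fin (d + 2))} (hS : S ∈ Good (d + 2)) :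
    MinimalWithDescents d (Phi S) := by
  have hS' := hS
  simp only [Good, mem_filter, mem_univ, true_and] at hS'
  obtain ⟨hc2, hcn, hcond1, hcond2⟩ := hS'
  obtain ⟨a0, ha0, b0, hb0, hab0, a0', ha0', haa0⟩ := hcond1
  obtain ⟨a1, ha1, b1, hb1, hab1, b1', hb1', hbb1⟩ := hcond2
  have hone : OneAsc (Phi S) (S.card - 1) :=
    oneAsc_phi (by omega) (by omega) ⟨a0, ha0, b0, hb0, hab0⟩
  rw [minimal_iff hd]
  constructor
  · have : descNum (Phi S) = (d + 2) - 2 := (descNum_eq_oneAsc (by omega)).2 ⟨_, hone⟩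
    omega
  · rintro ⟨f, hf⟩
    have hT : ((univ.image f)ᶜ : Finset (Fin (d + 2))).card = 1 := by
      rw [card_compl_fin, card_image_of_injective _ f.injective, card_univ, Fintype.card_fin]
      omega
    obtain ⟨j, hj⟩ := card_eq_one.1 hT
    have hmem : ∀ p : Fin (d + 2), p ≠ j → ∃ ℓ, f ℓ = p := by
      intro p hp
      have : p ∈ univ.image f := by
        by_contra hcon
        have : p ∈ (univ.image f)ᶜ := mem_compl.2 hcon
        rw [hj, mem_singleton] at this
        exact hp this
      simpa using this
    have hanti : ∀ p q : Fin (d + 2), p ≠ j → q ≠ j → p < q → Phi S q < Phi S p := by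
      intro p q hp hq hpq
      obtain ⟨ℓ, rfl⟩ := hmem p hp
      obtain ⟨m, rfl⟩ := hmem q hq
      exact hf ℓ m (f.lt_iff_lt.1 hpq)
    -- positions around the ascent
    have hk2 : S.card ≤ d := hcn
    have hA : Phi S ⟨S.card - 1, by omega⟩ < Phi S ⟨S.card, by omega⟩ :=
      lt_of_le_of_lt (phi_le_of_mem ha0 rfl)
        (lt_of_lt_of_le hab0 (le_phi_of_mem_compl hb0 rfl))
    by_cases hj1 : j = (⟨S.card - 1, by omega⟩ : Fin (d + 2))
    · -- use positions k-2 and k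
      have hB : Phi S ⟨S.card - 2, by omega⟩ < Phi S ⟨S.card, by omega⟩ :=
        lt_of_le_of_lt (phi_le_of_mem' ha0 ha0' haa0 rfl (by omega))
          (lt_of_lt_of_le hab0 (le_phi_of_mem_compl hb0 rfl))
      refine lt_asymm hB (hanti _ _ ?_ ?_ ?_)
      · rw [hj1]; intro hcon; rw [Fin.mk.injEq] at hcon; omega
      · rw [hj1]; intro hcon; rw [Fin.mk.injEq] at hcon; omega
      · simp only [Fin.mk_lt_mk]; omega
    · by_cases hj2 : j = (⟨S.card, by omega⟩ : Fin (d + 2))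
      · -- use positions k-1 and k+1
        have hB : Phi S ⟨S.card - 1, by omega⟩ < Phi S ⟨S.card + 1, by omega⟩ :=
          lt_of_le_of_lt (phi_le_of_mem ha1 rfl)
            (lt_of_lt_of_le hab1 (le_phi_of_mem_compl' hb1 hb1' hbb1 rfl))
        refine lt_asymm hB (hanti _ _ ?_ ?_ ?_)
        · rw [hj2]; intro hcon; rw [Fin.mk.injEq] at hcon; omega
        · rw [hj2]; intro hcon; rw [Fin.mk.injEq] at hcon; omega
        · simp only [Fin.mk_lt_mk]; omega
      · refine lt_asymm hA (hanti _ _ ?_ ?_ ?_)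
        · exact fun hcon => hj1 hcon.symm
        · exact fun hcon => hj2 hcon.symm
        · simp only [Fin.mk_lt_mk]; omega

lemma minimal_structure {d : ℕ} (hd : 2 ≤ d) {σ : Equiv.Perm (Fin (d + 2))}
    (h : MinimalWithDescents d σ) : ∃ S ∈ Good (d + 2), σ = Phi S := by
  rw [minimal_iff hd] at h
  obtain ⟨h1, h2⟩ := h
  obtain ⟨i, hone⟩ := (descNum_eq_oneAsc (n := d + 2) (by omega)).1
    (show descNum σ = d + 2 - 2 by omega)
  obtain ⟨hcard, heq⟩ := eq_phi_of_oneAsc hone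
  set S := (univ.filter (fun p : Fin (d + 2) => (p : ℕ) ≤ i)).image σ with hSdef
  have hin : i + 1 < d + 2 := hone.1
  have hanti_of : ∀ j : Fin (d + 2),
      (∀ p q : Fin (d + 2), p ≠ j → q ≠ j → p < q → Phi S q < Phi S p) → False := by
    intro j hj
    apply h2
    refine ⟨Fin.succAboveOrderEmb j, fun p q hpq => ?_⟩
    rw [heq]
    exact hj _ _ (Fin.succAbove_ne j p) (Fin.succAbove_ne j q)
      ((Fin.succAboveOrderEmb j).strictMono hpq)
  -- 2 ≤ S.card  (i.e. i ≥ 1)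
  have hi1 : 1 ≤ i := by
    by_contra hcon
    have hi0 : i = 0 := by omega
    apply hanti_of ⟨0, by omega⟩
    intro p q hp hq hpq
    have hp' : 1 ≤ (p : ℕ) := by
      rcases Nat.eq_zero_or_pos (p : ℕ) with h | h
      · exact absurd (Fin.ext h) hp
      · omega
    exact phi_right_lt (by omega) hpq
  -- S.card ≤ d  (i.e. i ≤ d - 1)
  have hi2 : i ≤ d - 1 := by
    by_contra hcon
    have hieq : i = d := by omega
    apply hanti_of ⟨d + 1, by omega⟩
    intro p q hp hq hpq
    have hq' : (q : ℕ) ≤ d := by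
      have := q.isLt
      rcases Nat.lt_or_ge (q : ℕ) (d + 1) with h | h
      · omega
      · exact absurd (Fin.ext (show (q : ℕ) = d + 1 by omega)) hq
    exact phi_left_lt (by omega) hpq
  have hcond1 : Cond1 S := by
    by_contra hcon
    have hnc : ∀ a ∈ S, ∀ b ∈ Sᶜ, (∃ a' ∈ S, a' < a) → b < a := by
      intro a ha b hb ha'
      rcases lt_trichotomy a b with h | h | h
      · exact absurd ⟨a, ha, b, hb, h, ha'⟩ hcon
      · exact absurd h (mem_ne_compl ha hb)
      · exact h
    apply hanti_of ⟨S.card - 1, by omega⟩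
    intro p q hp hq hpq
    rcases Nat.lt_or_ge (q : ℕ) S.card with hql | hql
    · exact phi_left_lt hql hpq
    rcases Nat.lt_or_ge (p : ℕ) S.card with hpl | hpl
    · -- p < card ≤ q, p ≠ k-1 so p ≤ k-2
      have hp2 : (p : ℕ) ≤ S.card - 2 := by
        rcases Nat.lt_or_ge (p : ℕ) (S.card - 1) with h | h
        · omega
        · exact absurd (Fin.ext (show (p : ℕ) = S.card - 1 by omega)) hp
      have hmemp : Phi S p ∈ S := phiFun_mem_left hpl
      have hmemq : Phi S q ∈ Sᶜ := phiFun_mem_right (by omega)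
      refine hnc _ hmemp _ hmemq ⟨Phi S ⟨S.card - 1, by omega⟩,
        phiFun_mem_left (show S.card - 1 < S.card by omega), ?_⟩
      refine phi_left_lt (show ((⟨S.card - 1, by omega⟩ : Fin (d + 2)) : ℕ) < S.card
        by show S.card - 1 < S.card; omega) ?_
      rw [Fin.lt_def]
      show (p : ℕ) < S.card - 1
      omega
    · exact phi_right_lt hpl hpq
  have hcond2 : Cond2 S := by
    by_contra hcon
    have hnc : ∀ a ∈ S, ∀ b ∈ Sᶜ, (∃ b' ∈ Sᶜ, b < b') → b < a := by
      intro a ha b hb hb'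
      rcases lt_trichotomy a b with h | h | h
      · exact absurd ⟨a, ha, b, hb, h, hb'⟩ hcon
      · exact absurd h (mem_ne_compl ha hb)
      · exact h
    apply hanti_of ⟨S.card, by omega⟩
    intro p q hp hq hpq
    rcases Nat.lt_or_ge (q : ℕ) S.card with hql | hql
    · exact phi_left_lt hql hpq
    rcases Nat.lt_or_ge (p : ℕ) S.card with hpl | hpl
    · have hq2 : S.card + 1 ≤ (q : ℕ) := by
        rcases Nat.lt_or_ge S.card (q : ℕ) with h | h
        · omega
        · exact absurd (Fin.ext (show (q : ℕ) = S.card by omega)) hq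
      have hmemp : Phi S p ∈ S := phiFun_mem_left hpl
      have hmemq : Phi S q ∈ Sᶜ := phiFun_mem_right (by omega)
      refine hnc _ hmemp _ hmemq ⟨Phi S ⟨S.card, by omega⟩,
        phiFun_mem_right (lt_irrefl S.card), ?_⟩
      refine phi_right_lt (le_refl S.card) ?_
      rw [Fin.lt_def]
      show S.card < (q : ℕ)
      omega
    · exact phi_right_lt hpl hpq
  exact ⟨S, by simp only [Good, mem_filter, mem_univ, true_and]; exact ⟨by omega, by omega,
    hcond1, hcond2⟩, heq⟩

end MinPerm5


namespace MinPerm6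
open Finset MinPerm MinPerm4 MinPerm5
open scoped Classical

lemma card_filter_lt {n : ℕ} (k : ℕ) (hk : 1 ≤ k) (hkn : k ≤ n) :
    (univ.filter (fun p : Fin n => (p : ℕ) < k)).card = k := by
  have h : univ.filter (fun p : Fin n => (p : ℕ) < k) =
      univ.filter (fun p : Fin n => (p : ℕ) ≤ k - 1) := by
    ext p; simp only [mem_filter, mem_univ, true_and]; omega
  rw [h, filter_le_card (show k - 1 < n by omega)]
  omega

lemma image_phi {n : ℕ} (S : Finset (Fin n)) (h1 : 1 ≤ S.card) :
    (univ.filter (fun p : Fin n => (p : ℕ) < S.card)).image (Phi S) = S := by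
  have hsub : (univ.filter (fun p : Fin n => (p : ℕ) < S.card)).image (Phi S) ⊆ S := by
    intro v hv
    obtain ⟨p, hp, rfl⟩ := mem_image.1 hv
    exact phiFun_mem_left (mem_filter.1 hp).2
  refine (eq_of_subset_of_card_le hsub ?_)
  rw [card_image_of_injective _ (Phi S).injective,
    card_filter_lt S.card h1 (by simpa using card_le_univ S)]

lemma phi_injOn {d : ℕ} (hd : 2 ≤ d) :
    Set.InjOn Phi ((Good (d + 2) : Finset (Finset (Fin (d + 2)))) : Set (Finset (Fin (d + 2)))) := by
  intro S hS T hT heq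
  simp only [mem_coe, Good, mem_filter, mem_univ, true_and] at hS hT
  obtain ⟨hS2, hSn, hSc1, -⟩ := hS
  obtain ⟨hT2, hTn, hTc1, -⟩ := hT
  obtain ⟨a0, ha0, b0, hb0, hab0, -⟩ := hSc1
  obtain ⟨a1, ha1, b1, hb1, hab1, -⟩ := hTc1
  have h1 : OneAsc (Phi S) (S.card - 1) :=
    oneAsc_phi (by omega) (by omega) ⟨a0, ha0, b0, hb0, hab0⟩
  have h2 : OneAsc (Phi T) (T.card - 1) :=
    oneAsc_phi (by omega) (by omega) ⟨a1, ha1, b1, hb1, hab1⟩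
  rw [heq] at h1
  have hcc : S.card = T.card := by
    by_contra hne
    exact h1.2.1 (h2.2.2 _ h1.1 (by omega))
  calc S = (univ.filter (fun p : Fin (d + 2) => (p : ℕ) < S.card)).image (Phi S) :=
        (image_phi S (by omega)).symm
    _ = (univ.filter (fun p : Fin (d + 2) => (p : ℕ) < T.card)).image (Phi T) := by
        rw [heq, hcc]
    _ = T := image_phi T (by omega)

lemma lhs_ncard {d : ℕ} (hd : 2 ≤ d) :
    {σ : Equiv.Perm (Fin (d + 2)) | MinimalWithDescents d σ}.ncard = (Good (d + 2)).card := by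
  have hset : {σ : Equiv.Perm (Fin (d + 2)) | MinimalWithDescents d σ} =
      ↑((Good (d + 2)).image Phi) := by
    ext σ
    simp only [Set.mem_setOf_eq, coe_image, Set.mem_image, mem_coe]
    constructor
    · intro h
      obtain ⟨S, hS, hsig⟩ := minimal_structure hd h
      exact ⟨S, hS, hsig.symm⟩
    · rintro ⟨S, hS, rfl⟩
      exact phi_minimal hd hS
  rw [hset, Set.ncard_coe_finset, card_image_of_injOn (phi_injOn hd)]

end MinPerm6


namespace MinPerm7
open Finset MinPerm MinPerm4 MinPerm5 MinPerm6
open scoped Classical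

noncomputable def Mid (n : ℕ) : Finset (Finset (Fin n)) :=
  univ.filter (fun S => 2 ≤ S.card ∧ S.card ≤ n - 2)

def TopF (n t : ℕ) : Finset (Fin n) := univ.filter (fun v => t ≤ (v : ℕ))

def BotF (n t : ℕ) : Finset (Fin n) := univ.filter (fun v => (v : ℕ) < t)

def psi1 (n : ℕ) (p : Fin n × Fin n) : Finset (Fin n) := insert p.2 (TopF n (p.1 : ℕ))

def psi2 (n : ℕ) (p : Fin n × Fin n) : Finset (Fin n) := (insert p.2 (BotF n (p.1 : ℕ)))ᶜ

def P1 (n : ℕ) : Finset (Fin n × Fin n) :=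
  (univ ×ˢ univ).filter (fun p => 3 ≤ (p.1 : ℕ) ∧ (p.1 : ℕ) ≤ n - 1 ∧ (p.2 : ℕ) < (p.1 : ℕ))

def P2 (n : ℕ) : Finset (Fin n × Fin n) :=
  (univ ×ˢ univ).filter (fun p => 1 ≤ (p.1 : ℕ) ∧ (p.1 : ℕ) ≤ n - 3 ∧ (p.1 : ℕ) ≤ (p.2 : ℕ))

def P3 (n : ℕ) : Finset (Fin n × Fin n) :=
  (univ ×ˢ univ).filter (fun p => 3 ≤ (p.1 : ℕ) ∧ (p.1 : ℕ) ≤ n - 1 ∧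
    ((p.2 : ℕ) = (p.1 : ℕ) - 1 ∨ (p.2 : ℕ) = (p.1 : ℕ) - 2))

lemma mem_P1 {n : ℕ} {p : Fin n × Fin n} :
    p ∈ P1 n ↔ 3 ≤ (p.1 : ℕ) ∧ (p.1 : ℕ) ≤ n - 1 ∧ (p.2 : ℕ) < (p.1 : ℕ) := by
  simp [P1, mem_filter, mem_product]

lemma mem_P2 {n : ℕ} {p : Fin n × Fin n} :
    p ∈ P2 n ↔ 1 ≤ (p.1 : ℕ) ∧ (p.1 : ℕ) ≤ n - 3 ∧ (p.1 : ℕ) ≤ (p.2 : ℕ) := by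
  simp [P2, mem_filter, mem_product]

lemma mem_P3 {n : ℕ} {p : Fin n × Fin n} :
    p ∈ P3 n ↔ 3 ≤ (p.1 : ℕ) ∧ (p.1 : ℕ) ≤ n - 1 ∧
      ((p.2 : ℕ) = (p.1 : ℕ) - 1 ∨ (p.2 : ℕ) = (p.1 : ℕ) - 2) := by
  simp [P3, mem_filter, mem_product]

lemma mem_psi1 {n : ℕ} {p : Fin n × Fin n} {v : Fin n} :
    v ∈ psi1 n p ↔ v = p.2 ∨ (p.1 : ℕ) ≤ (v : ℕ) := by
  simp [psi1, TopF, mem_insert, mem_filter]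

lemma mem_psi2 {n : ℕ} {p : Fin n × Fin n} {v : Fin n} :
    v ∈ psi2 n p ↔ ¬ (v = p.2 ∨ (v : ℕ) < (p.1 : ℕ)) := by
  simp only [psi2, mem_compl, mem_insert, BotF, mem_filter, mem_univ, true_and]

lemma mem_P1p {n : ℕ} {t x : Fin n} :
    (t, x) ∈ P1 n ↔ 3 ≤ (t : ℕ) ∧ (t : ℕ) ≤ n - 1 ∧ (x : ℕ) < (t : ℕ) := mem_P1

lemma mem_P2p {n : ℕ} {t x : Fin n} :
    (t, x) ∈ P2 n ↔ 1 ≤ (t : ℕ) ∧ (t : ℕ) ≤ n - 3 ∧ (t : ℕ) ≤ (x : ℕ) := mem_P2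

lemma mem_P3p {n : ℕ} {t x : Fin n} :
    (t, x) ∈ P3 n ↔ 3 ≤ (t : ℕ) ∧ (t : ℕ) ≤ n - 1 ∧
      ((x : ℕ) = (t : ℕ) - 1 ∨ (x : ℕ) = (t : ℕ) - 2) := mem_P3

lemma mem_psi1p {n : ℕ} {t x v : Fin n} :
    v ∈ psi1 n (t, x) ↔ v = x ∨ (t : ℕ) ≤ (v : ℕ) := mem_psi1

lemma card_TopF {n t : ℕ} (ht : t < n) : (TopF n t).card = n - t := by
  have : TopF n t = Finset.Ici (⟨t, ht⟩ : Fin n) := by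
    ext v; simp [TopF, Fin.le_def]
  rw [this, Fin.card_Ici]

lemma card_BotF {n t : ℕ} (ht : t ≤ n) : (BotF n t).card = t := by
  rcases Nat.eq_zero_or_pos t with h | h
  · subst h
    rw [show BotF n 0 = ∅ by ext v; simp [BotF]]
    rfl
  · exact card_filter_lt t h ht

lemma card_psi1 {n : ℕ} {p : Fin n × Fin n} (hp : (p.2 : ℕ) < (p.1 : ℕ)) :
    (psi1 n p).card = n - (p.1 : ℕ) + 1 := by
  rw [psi1, card_insert_of_notMem (by simp [TopF]; omega), card_TopF p.1.isLt]

lemma card_psi2_compl {n : ℕ} {p : Fin n × Fin n} (hp : (p.1 : ℕ) ≤ (p.2 : ℕ)) :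
    ((psi2 n p)ᶜ).card = (p.1 : ℕ) + 1 := by
  rw [psi2, compl_compl, card_insert_of_notMem (by simp [BotF]; omega),
    card_BotF (le_of_lt p.1.isLt)]

lemma card_psi1p {n : ℕ} {t x : Fin n} (hp : (x : ℕ) < (t : ℕ)) :
    (psi1 n (t, x)).card = n - (t : ℕ) + 1 := card_psi1 hp

lemma notC1_forall {n : ℕ} {S : Finset (Fin n)} (h : ¬ Cond1 S) :
    ∀ a ∈ S, ∀ b ∈ Sᶜ, (∃ a' ∈ S, a' < a) → b < a := by
  intro a ha b hb ha'
  rcases lt_trichotomy a b with h1 | h1 | h1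
  · exact absurd ⟨a, ha, b, hb, h1, ha'⟩ h
  · exact absurd h1 (mem_ne_compl ha hb)
  · exact h1

lemma notC2_forall {n : ℕ} {S : Finset (Fin n)} (h : ¬ Cond2 S) :
    ∀ a ∈ S, ∀ b ∈ Sᶜ, (∃ b' ∈ Sᶜ, b < b') → b < a := by
  intro a ha b hb hb'
  rcases lt_trichotomy a b with h1 | h1 | h1
  · exact absurd ⟨a, ha, b, hb, h1, hb'⟩ h
  · exact absurd h1 (mem_ne_compl ha hb)
  · exact h1

/-- Structure of a mid-size set failing Cond1. -/
lemma notC1_form {n : ℕ} {S : Finset (Fin n)} (h2 : 2 ≤ S.card) (hn2 : S.card ≤ n - 2)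
    (hnc : ¬ Cond1 S) : ∃ q : Fin n × Fin n, q ∈ P1 n ∧ S = psi1 n q := by
  have hne : S.Nonempty := card_pos.1 (by omega)
  set m := S.min' hne with hm
  have hmS : m ∈ S := S.min'_mem hne
  have hSe : (S.erase m).Nonempty := by
    rw [← card_pos, card_erase_of_mem hmS]; omega
  set m2 := (S.erase m).min' hSe with hm2
  have hm2e : m2 ∈ S.erase m := min'_mem _ _
  have hm2S : m2 ∈ S := mem_of_mem_erase hm2e
  have hmm2 : m < m2 :=
    lt_of_le_of_ne (S.min'_le m2 hm2S) (Ne.symm (ne_of_mem_erase hm2e))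
  have hb : ∀ b ∈ Sᶜ, (b : ℕ) < (m2 : ℕ) := by
    intro b hbc
    exact notC1_forall hnc m2 hm2S b hbc ⟨m, hmS, hmm2⟩
  have hform : S = psi1 n (m2, m) := by
    ext v
    rw [mem_psi1p]
    constructor
    · intro hv
      rcases eq_or_ne v m with h | h
      · exact Or.inl h
      · exact Or.inr ((S.erase m).min'_le v (mem_erase.2 ⟨h, hv⟩))
    · rintro (rfl | hv)
      · exact hmS
      · by_contra hcon
        exact absurd (hb v (mem_compl.2 hcon)) (by omega)
  have hcardS : S.card = n - (m2 : ℕ) + 1 := by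
    rw [hform]; exact card_psi1 hmm2
  have hm2n := m2.isLt
  refine ⟨(m2, m), mem_P1p.2 ⟨by omega, by omega, hmm2⟩, hform⟩

lemma notC1_psi1 {n : ℕ} {q : Fin n × Fin n} (hq : (q.2 : ℕ) < (q.1 : ℕ)) :
    ¬ Cond1 (psi1 n q) := by
  rintro ⟨a, ha, b, hb, hab, a', ha', haa⟩
  rw [mem_psi1] at ha ha'
  rw [mem_compl, mem_psi1] at hb
  push_neg at hb
  have hab' : (a : ℕ) < (b : ℕ) := hab
  have haa' : (a' : ℕ) < (a : ℕ) := haa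
  have hb2 : (b : ℕ) ≠ (q.2 : ℕ) := fun h => hb.1 (Fin.ext h)
  rcases ha with rfl | ha
  · rcases ha' with rfl | ha'
    · omega
    · omega
  · omega

lemma mid_psi1 {n : ℕ} {q : Fin n × Fin n} (hq : q ∈ P1 n) :
    2 ≤ (psi1 n q).card ∧ (psi1 n q).card ≤ n - 2 := by
  rw [mem_P1] at hq
  rw [card_psi1 hq.2.2]
  have := q.1.isLt
  omega

/-- Claim C1 -/
lemma badC1_eq {n : ℕ} :
    (Mid n).filter (fun S => ¬ Cond1 S) = (P1 n).image (psi1 n) := by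
  ext S
  simp only [mem_filter, Mid, mem_univ, true_and, mem_image]
  constructor
  · rintro ⟨⟨h2, hn2⟩, hnc⟩
    obtain ⟨q, hq, hform⟩ := notC1_form h2 hn2 hnc
    exact ⟨q, hq, hform.symm⟩
  · rintro ⟨q, hq, rfl⟩
    exact ⟨mid_psi1 hq, notC1_psi1 (mem_P1.1 hq).2.2⟩

lemma psi1_injOn {n : ℕ} : Set.InjOn (psi1 n) {q | (q.2 : ℕ) < (q.1 : ℕ)} := by
  rintro ⟨t, x⟩ ht ⟨t', x'⟩ ht' heq
  simp only [Set.mem_setOf_eq] at ht ht'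
  have hcard : n - (t : ℕ) + 1 = n - (t' : ℕ) + 1 := by
    rw [← card_psi1p ht, ← card_psi1p ht', heq]
  have htn := t.isLt
  have ht'n := t'.isLt
  have htt : (t : ℕ) = (t' : ℕ) := by omega
  have hx : x ∈ psi1 n (t', x') := by rw [← heq, mem_psi1p]; exact Or.inl rfl
  have hx' : x' ∈ psi1 n (t, x) := by rw [heq, mem_psi1p]; exact Or.inl rfl
  rw [mem_psi1p] at hx hx'
  have hxx : x = x' := by
    rcases hx with h | h
    · exact h
    · rcases hx' with h' | h'
      · exact h'.symm
      · omega
  rw [Prod.mk.injEq]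
  exact ⟨Fin.ext htt, hxx⟩

/-- Structure of a mid-size set failing Cond2. -/
lemma notC2_form {n : ℕ} {S : Finset (Fin n)} (h2 : 2 ≤ S.card) (hn2 : S.card ≤ n - 2)
    (hnc : ¬ Cond2 S) : ∃ q : Fin n × Fin n, q ∈ P2 n ∧ S = psi2 n q := by
  have hn4 : 4 ≤ n := by
    have := card_le_univ S
    simp only [card_univ, Fintype.card_fin] at this
    omega
  have hcne : Sᶜ.Nonempty := by
    rw [← card_pos, card_compl_fin]; omega
  have hne : S.Nonempty := card_pos.1 (by omega)
  set M := Sᶜ.max' hcne with hM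
  have hMc : M ∈ Sᶜ := max'_mem _ _
  set m0 := S.min' hne with hm0
  have hm0S : m0 ∈ S := min'_mem _ _
  have hblt : ∀ b ∈ Sᶜ, b ≠ M → (b : ℕ) < (m0 : ℕ) := by
    intro b hb hbM
    exact notC2_forall hnc m0 hm0S b hb
      ⟨M, hMc, lt_of_le_of_ne (le_max' _ _ hb) hbM⟩
  have hbot : ∀ v : Fin n, (v : ℕ) < (m0 : ℕ) → v ∈ Sᶜ := by
    intro v hv
    rw [mem_compl]
    intro hvS
    exact absurd (S.min'_le v hvS) (by rw [← hm0, Fin.le_def]; omega)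
  have hm0n := m0.isLt
  have hMn := M.isLt
  rcases Nat.lt_or_ge (M : ℕ) (m0 : ℕ) with hcase | hcase
  · -- Sᶜ = BotF m0, use q = (m0-1, m0-1)
    have hm01 : 1 ≤ (m0 : ℕ) := by omega
    have hcompl : Sᶜ = insert (⟨(m0 : ℕ) - 1, by omega⟩ : Fin n)
        (BotF n ((⟨(m0 : ℕ) - 1, by omega⟩ : Fin n) : ℕ)) := by
      ext v
      simp only [mem_insert, BotF, mem_filter, mem_univ, true_and]
      constructor
      · intro hv
        have hvm0 : (v : ℕ) < (m0 : ℕ) := by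
          rcases eq_or_ne v M with h | h
          · rw [h]; exact hcase
          · exact hblt v hv h
        rcases Nat.lt_or_ge (v : ℕ) ((m0 : ℕ) - 1) with h | h
        · exact Or.inr h
        · exact Or.inl (Fin.ext (show (v : ℕ) = (m0 : ℕ) - 1 by omega))
      · rintro (rfl | hv)
        · exact hbot _ (show (m0 : ℕ) - 1 < (m0 : ℕ) by omega)
        · have hv' : (v : ℕ) < (m0 : ℕ) - 1 := hv
          exact hbot _ (by omega)
    have hcard : Sᶜ.card = (m0 : ℕ) := by
      rw [hcompl, card_insert_of_notMem (by simp [BotF]), card_BotF (by omega)]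
      show (m0 : ℕ) - 1 + 1 = (m0 : ℕ)
      omega
    have hSc : Sᶜ.card = n - S.card := card_compl_fin S
    refine ⟨(⟨(m0 : ℕ) - 1, by omega⟩, ⟨(m0 : ℕ) - 1, by omega⟩),
      mem_P2p.2 ⟨show 1 ≤ (m0 : ℕ) - 1 by omega, show (m0 : ℕ) - 1 ≤ n - 3 by omega,
        le_refl _⟩, ?_⟩
    show S = (insert (⟨(m0 : ℕ) - 1, by omega⟩ : Fin n)
      (BotF n ((⟨(m0 : ℕ) - 1, by omega⟩ : Fin n) : ℕ)))ᶜ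
    rw [← hcompl, compl_compl]
  · -- Sᶜ = insert M (BotF m0), use q = (m0, M)
    have hcompl : Sᶜ = insert M (BotF n (m0 : ℕ)) := by
      ext v
      simp only [mem_insert, BotF, mem_filter, mem_univ, true_and]
      constructor
      · intro hv
        rcases eq_or_ne v M with h | h
        · exact Or.inl h
        · exact Or.inr (hblt v hv h)
      · rintro (rfl | hv)
        · exact hMc
        · exact hbot _ hv
    have hcard : Sᶜ.card = (m0 : ℕ) + 1 := by
      rw [hcompl, card_insert_of_notMem (by simp [BotF]; omega), card_BotF (by omega)]
    have hSc : Sᶜ.card = n - S.card := card_compl_fin S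
    refine ⟨(m0, M), mem_P2p.2 ⟨by omega, by omega, by omega⟩, ?_⟩
    show S = (insert M (BotF n (m0 : ℕ)))ᶜ
    rw [← hcompl, compl_compl]

lemma notC2_psi2 {n : ℕ} {q : Fin n × Fin n} (hq : (q.1 : ℕ) ≤ (q.2 : ℕ)) :
    ¬ Cond2 (psi2 n q) := by
  rintro ⟨a, ha, b, hb, hab, b', hb', hbb⟩
  rw [mem_psi2] at ha
  push_neg at ha
  simp only [psi2, compl_compl, mem_insert, BotF, mem_filter, mem_univ, true_and] at hb hb'
  have hb2 : (b : ℕ) = (q.2 : ℕ) ∨ (b : ℕ) < (q.1 : ℕ) := by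
    rcases hb with h | h
    · exact Or.inl (congrArg Fin.val h)
    · exact Or.inr h
  have hb2' : (b' : ℕ) = (q.2 : ℕ) ∨ (b' : ℕ) < (q.1 : ℕ) := by
    rcases hb' with h | h
    · exact Or.inl (congrArg Fin.val h)
    · exact Or.inr h
  have hab' : (a : ℕ) < (b : ℕ) := hab
  have hbb' : (b : ℕ) < (b' : ℕ) := hbb
  have ha2 : (q.1 : ℕ) ≤ (a : ℕ) := ha.2
  omega

lemma mid_psi2 {n : ℕ} (hn : 4 ≤ n) {q : Fin n × Fin n} (hq : q ∈ P2 n) :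
    2 ≤ (psi2 n q).card ∧ (psi2 n q).card ≤ n - 2 := by
  rw [mem_P2] at hq
  have h1 : ((psi2 n q)ᶜ).card = (q.1 : ℕ) + 1 := card_psi2_compl hq.2.2
  have h2 : ((psi2 n q)ᶜ).card = n - (psi2 n q).card := card_compl_fin _
  have h3 := card_le_univ (psi2 n q)
  simp only [card_univ, Fintype.card_fin] at h3
  omega

/-- Claim C2 -/
lemma badC2_eq {n : ℕ} (hn : 4 ≤ n) :
    (Mid n).filter (fun S => ¬ Cond2 S) = (P2 n).image (psi2 n) := by
  ext S
  simp only [mem_filter, Mid, mem_univ, true_and, mem_image]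
  constructor
  · rintro ⟨⟨h2, hn2⟩, hnc⟩
    obtain ⟨q, hq, hform⟩ := notC2_form h2 hn2 hnc
    exact ⟨q, hq, hform.symm⟩
  · rintro ⟨q, hq, rfl⟩
    exact ⟨mid_psi2 hn hq, notC2_psi2 (mem_P2.1 hq).2.2⟩

end MinPerm7
namespace MinPerm8
open Finset MinPerm MinPerm4 MinPerm5 MinPerm6 MinPerm7
open scoped Classical

lemma psi2_injOn {n : ℕ} : Set.InjOn (psi2 n) {q : Fin n × Fin n | (q.1 : ℕ) ≤ (q.2 : ℕ)} := by
  rintro ⟨t, x⟩ ht ⟨t', x'⟩ ht' heq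
  simp only [Set.mem_setOf_eq] at ht ht'
  have heq' : insert x (BotF n (t : ℕ)) = insert x' (BotF n (t' : ℕ)) := by
    have h2 := congrArg (·ᶜ) heq
    simpa only [psi2, compl_compl] using h2
  have c1 : (insert x (BotF n (t : ℕ))).card = (t : ℕ) + 1 := by
    rw [card_insert_of_notMem (by simp [BotF]; omega), card_BotF (le_of_lt t.isLt)]
  have c2 : (insert x' (BotF n (t' : ℕ))).card = (t' : ℕ) + 1 := by
    rw [card_insert_of_notMem (by simp [BotF]; omega), card_BotF (le_of_lt t'.isLt)]
  rw [heq', c2] at c1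
  have htt : (t : ℕ) = (t' : ℕ) := by omega
  have hx : x ∈ insert x' (BotF n (t' : ℕ)) := by rw [← heq']; exact mem_insert_self _ _
  simp only [mem_insert, BotF, mem_filter, mem_univ, true_and] at hx
  rcases hx with h | h
  · rw [Prod.mk.injEq]; exact ⟨Fin.ext htt, h⟩
  · omega

/-- Claim C3 -/
lemma badC12_eq {n : ℕ} :
    (Mid n).filter (fun S => ¬ Cond1 S ∧ ¬ Cond2 S) = (P3 n).image (psi1 n) := by
  ext S
  simp only [mem_filter, Mid, mem_univ, true_and, mem_image]
  constructor
  · rintro ⟨⟨h2, hn2⟩, hnc1, hnc2⟩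
    obtain ⟨⟨t, x⟩, hq, rfl⟩ := notC1_form h2 hn2 hnc1
    rw [mem_P1p] at hq
    obtain ⟨ht3, htn, hxt⟩ := hq
    have htn' := t.isLt
    have hx2 : (t : ℕ) - 2 ≤ (x : ℕ) := by
      by_contra hcon
      push_neg at hcon
      have hb : (⟨(t : ℕ) - 2, by omega⟩ : Fin n) ∈ (psi1 n (t, x))ᶜ := by
        rw [mem_compl, mem_psi1p]
        rintro (h | h)
        · have h2 := congrArg Fin.val h
          simp only at h2
          omega
        · have h' : (t : ℕ) ≤ (t : ℕ) - 2 := h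
          omega
      have hb' : (⟨(t : ℕ) - 1, by omega⟩ : Fin n) ∈ (psi1 n (t, x))ᶜ := by
        rw [mem_compl, mem_psi1p]
        rintro (h | h)
        · have h2 := congrArg Fin.val h
          simp only at h2
          omega
        · have h' : (t : ℕ) ≤ (t : ℕ) - 1 := h
          omega
      have hlt := notC2_forall hnc2 x (mem_psi1p.2 (Or.inl rfl)) _ hb
        ⟨_, hb', show ((⟨(t : ℕ) - 2, by omega⟩ : Fin n)) < ⟨(t : ℕ) - 1, by omega⟩ from
          by rw [Fin.lt_def]; show (t : ℕ) - 2 < (t : ℕ) - 1; omega⟩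
      have hlt' : (t : ℕ) - 2 < (x : ℕ) := hlt
      omega
    exact ⟨(t, x), mem_P3p.2 ⟨ht3, htn, by omega⟩, rfl⟩
  · rintro ⟨⟨t, x⟩, hq, rfl⟩
    rw [mem_P3p] at hq
    obtain ⟨ht3, htn, hx⟩ := hq
    have hxt : (x : ℕ) < (t : ℕ) := by omega
    refine ⟨mid_psi1 (mem_P1p.2 ⟨ht3, htn, hxt⟩), notC1_psi1 hxt, ?_⟩
    rintro ⟨a, ha, b, hb, hab, b', hb', hbb⟩
    rw [mem_psi1p] at ha
    rw [mem_compl, mem_psi1p] at hb hb'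
    push_neg at hb hb'
    have hbt : (b : ℕ) < (t : ℕ) := by have := hb.2; omega
    have hb't : (b' : ℕ) < (t : ℕ) := by have := hb'.2; omega
    have hbx' : (b : ℕ) ≠ (x : ℕ) := fun h => hb.1 (Fin.ext h)
    have hb'x' : (b' : ℕ) ≠ (x : ℕ) := fun h => hb'.1 (Fin.ext h)
    have ha' : (a : ℕ) = (x : ℕ) ∨ (t : ℕ) ≤ (a : ℕ) := by
      rcases ha with h | h
      · exact Or.inl (congrArg Fin.val h)
      · exact Or.inr h
    have h1 : (a : ℕ) < (b : ℕ) := hab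
    have h2 : (b : ℕ) < (b' : ℕ) := hbb
    omega

lemma mid_card {n : ℕ} (hn : 4 ≤ n) : (Mid n).card + 2 + 2 * n = 2 ^ n := by
  have htot := card_filter_add_card_filter_not
    (s := (univ : Finset (Finset (Fin n)))) (p := fun S => 2 ≤ S.card ∧ S.card ≤ n - 2)
  beta_reduce at htot
  have hneg : (univ : Finset (Finset (Fin n))).filter
      (fun S => ¬ (2 ≤ S.card ∧ S.card ≤ n - 2)) =
      ((powersetCard 0 (univ : Finset (Fin n)) ∪ powersetCard 1 univ) ∪
        powersetCard (n - 1) univ) ∪ powersetCard n univ := by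
    ext S
    have hS : S.card ≤ n := by
      have h2 := card_le_univ S
      simpa using h2
    simp only [mem_filter, mem_univ, true_and, mem_union, mem_powersetCard, subset_univ,
      true_and, card_univ, Fintype.card_fin]
    omega
  have hdisj1 : Disjoint (powersetCard 0 (univ : Finset (Fin n))) (powersetCard 1 univ) := by
    rw [disjoint_left]
    intro S h0 h1
    rw [mem_powersetCard] at h0 h1
    omega
  have hdisj2 : Disjoint (powersetCard 0 (univ : Finset (Fin n)) ∪ powersetCard 1 univ)
      (powersetCard (n - 1) univ) := by
    rw [disjoint_left]
    intro S h0 h1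
    rw [mem_union, mem_powersetCard, mem_powersetCard] at h0
    rw [mem_powersetCard] at h1
    omega
  have hdisj3 : Disjoint ((powersetCard 0 (univ : Finset (Fin n)) ∪ powersetCard 1 univ) ∪
      powersetCard (n - 1) univ) (powersetCard n univ) := by
    rw [disjoint_left]
    intro S h0 h1
    rw [mem_union, mem_union, mem_powersetCard, mem_powersetCard, mem_powersetCard] at h0
    rw [mem_powersetCard] at h1
    omega
  rw [hneg, card_union_of_disjoint hdisj3, card_union_of_disjoint hdisj2,
    card_union_of_disjoint hdisj1] at htot
  simp only [card_powersetCard, card_univ, Fintype.card_fin] at htot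
  have h0 : n.choose 0 = 1 := Nat.choose_zero_right n
  have h1 : n.choose 1 = n := Nat.choose_one_right n
  have hn1 : n.choose (n - 1) = n := by
    rw [Nat.choose_symm (show 1 ≤ n by omega), Nat.choose_one_right]
  have hnn : n.choose n = 1 := Nat.choose_self n
  have huniv : Fintype.card (Finset (Fin n)) = 2 ^ n := by
    rw [Fintype.card_finset, Fintype.card_fin]
  have hM : (univ : Finset (Finset (Fin n))).filter
      (fun S => 2 ≤ S.card ∧ S.card ≤ n - 2) = Mid n := rfl
  rw [hM] at htot
  omega

end MinPerm8
namespace MinPerm9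
open Finset MinPerm MinPerm4 MinPerm5 MinPerm6 MinPerm7 MinPerm8
open scoped Classical

def IP (d : ℕ) : Finset (ℕ × ℕ) :=
  ((Finset.Icc 1 (d + 1)) ×ˢ (Finset.Icc 1 (d + 1))).filter (fun p => p.1 ≤ p.2)

lemma P1_card {d : ℕ} (hd : 2 ≤ d) :
    (P1 (d + 2)).card = ((IP d).filter (fun q => 3 ≤ q.2)).card := by
  refine card_nbij' (i := fun p => ((p.2 : ℕ) + 1, (p.1 : ℕ)))
    (j := fun q => (⟨min q.2 (d + 1), by omega⟩, ⟨min (q.1 - 1) (d + 1), by omega⟩)) ?_ ?_ ?_ ?_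
  · rintro ⟨t, x⟩ hp
    rw [mem_coe, mem_P1p] at hp
    have h1 := t.isLt
    simp only [mem_coe, mem_filter, IP, mem_product, Finset.mem_Icc]
    omega
  · rintro ⟨a, b⟩ hq
    simp only [mem_coe, mem_filter, IP, mem_product, Finset.mem_Icc] at hq
    rw [mem_coe, mem_P1p]
    exact ⟨show 3 ≤ min b (d + 1) by omega, show min b (d + 1) ≤ d + 2 - 1 by omega,
      show min (a - 1) (d + 1) < min b (d + 1) by omega⟩
  · rintro ⟨t, x⟩ hp
    rw [mem_coe, mem_P1p] at hp
    have h1 := t.isLt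
    have h2 := x.isLt
    rw [Prod.mk.injEq]
    constructor
    · exact Fin.ext (show min (t : ℕ) (d + 1) = (t : ℕ) by omega)
    · exact Fin.ext (show min ((x : ℕ) + 1 - 1) (d + 1) = (x : ℕ) by omega)
  · rintro ⟨a, b⟩ hq
    simp only [mem_coe, mem_filter, IP, mem_product, Finset.mem_Icc] at hq
    rw [Prod.mk.injEq]
    constructor
    · show min (a - 1) (d + 1) + 1 = a
      omega
    · show min b (d + 1) = b
      omega

lemma IP_split1 {d : ℕ} (hd : 2 ≤ d) :
    ((IP d).filter (fun q => 3 ≤ q.2)).card + 3 = (IP d).card := by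
  have h := card_filter_add_card_filter_not (s := IP d) (p := fun q => 3 ≤ q.2)
  beta_reduce at h
  have h3 : (IP d).filter (fun q => ¬ 3 ≤ q.2) =
      {((1 : ℕ), (1 : ℕ)), (1, 2), (2, 2)} := by
    ext ⟨a, b⟩
    simp only [mem_filter, IP, mem_product, Finset.mem_Icc, mem_insert, mem_singleton,
      Prod.mk.injEq]
    omega
  rw [h3] at h
  have h4 : ({((1 : ℕ), (1 : ℕ)), (1, 2), (2, 2)} : Finset (ℕ × ℕ)).card = 3 := by decide
  omega

lemma P2_card {d : ℕ} (hd : 2 ≤ d) :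
    (P2 (d + 2)).card = ((IP d).filter (fun q => q.1 ≤ d - 1)).card := by
  refine card_nbij' (i := fun p => ((p.1 : ℕ), (p.2 : ℕ)))
    (j := fun q => (⟨min q.1 (d + 1), by omega⟩, ⟨min q.2 (d + 1), by omega⟩)) ?_ ?_ ?_ ?_
  · rintro ⟨t, x⟩ hp
    rw [mem_coe, mem_P2p] at hp
    have h1 := x.isLt
    simp only [mem_coe, mem_filter, IP, mem_product, Finset.mem_Icc]
    omega
  · rintro ⟨a, b⟩ hq
    simp only [mem_coe, mem_filter, IP, mem_product, Finset.mem_Icc] at hq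
    rw [mem_coe, mem_P2p]
    exact ⟨show 1 ≤ min a (d + 1) by omega, show min a (d + 1) ≤ d + 2 - 3 by omega,
      show min a (d + 1) ≤ min b (d + 1) by omega⟩
  · rintro ⟨t, x⟩ hp
    rw [mem_coe, mem_P2p] at hp
    have h1 := t.isLt
    have h2 := x.isLt
    rw [Prod.mk.injEq]
    exact ⟨Fin.ext (show min (t : ℕ) (d + 1) = (t : ℕ) by omega),
      Fin.ext (show min (x : ℕ) (d + 1) = (x : ℕ) by omega)⟩
  · rintro ⟨a, b⟩ hq
    simp only [mem_coe, mem_filter, IP, mem_product, Finset.mem_Icc] at hq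
    rw [Prod.mk.injEq]
    exact ⟨show min a (d + 1) = a by omega, show min b (d + 1) = b by omega⟩

lemma IP_split2 {d : ℕ} (hd : 2 ≤ d) :
    ((IP d).filter (fun q => q.1 ≤ d - 1)).card + 3 = (IP d).card := by
  have h := card_filter_add_card_filter_not (s := IP d) (p := fun q => q.1 ≤ d - 1)
  beta_reduce at h
  have h3 : (IP d).filter (fun q => ¬ q.1 ≤ d - 1) =
      {((d : ℕ), (d : ℕ)), (d, d + 1), (d + 1, d + 1)} := by
    ext ⟨a, b⟩
    simp only [mem_filter, IP, mem_product, Finset.mem_Icc, mem_insert, mem_singleton,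
      Prod.mk.injEq]
    omega
  rw [h3] at h
  have h4 : ({((d : ℕ), (d : ℕ)), (d, d + 1), (d + 1, d + 1)} : Finset (ℕ × ℕ)).card = 3 := by
    rw [card_insert_of_notMem (by simp only [mem_insert, mem_singleton, Prod.mk.injEq]; omega),
      card_insert_of_notMem (by simp only [mem_singleton, Prod.mk.injEq]; omega),
      card_singleton]
  omega

lemma P3_card {d : ℕ} (hd : 2 ≤ d) : (P3 (d + 2)).card = (d - 1) * 2 := by
  have hc : ((Finset.Icc 3 (d + 1)) ×ˢ (Finset.range 2)).card = (d - 1) * 2 := by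
    rw [card_product, Nat.card_Icc, card_range]
    omega
  rw [← hc]
  refine card_nbij' (i := fun p => ((p.1 : ℕ), (p.1 : ℕ) - 1 - (p.2 : ℕ)))
    (j := fun q => (⟨min q.1 (d + 1), by omega⟩, ⟨min (q.1 - 1 - q.2) (d + 1), by omega⟩))
    ?_ ?_ ?_ ?_
  · rintro ⟨t, x⟩ hp
    rw [mem_coe, mem_P3p] at hp
    have h1 := t.isLt
    simp only [mem_coe, mem_product, Finset.mem_Icc, mem_range]
    omega
  · rintro ⟨a, e⟩ hq
    simp only [mem_coe, mem_product, Finset.mem_Icc, mem_range] at hq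
    rw [mem_coe, mem_P3p]
    refine ⟨show 3 ≤ min a (d + 1) by omega, show min a (d + 1) ≤ d + 2 - 1 by omega, ?_⟩
    show min (a - 1 - e) (d + 1) = min a (d + 1) - 1 ∨ min (a - 1 - e) (d + 1) = min a (d + 1) - 2
    omega
  · rintro ⟨t, x⟩ hp
    rw [mem_coe, mem_P3p] at hp
    have h1 := t.isLt
    have h2 := x.isLt
    rw [Prod.mk.injEq]
    exact ⟨Fin.ext (show min (t : ℕ) (d + 1) = (t : ℕ) by omega),
      Fin.ext (show min ((t : ℕ) - 1 - ((t : ℕ) - 1 - (x : ℕ))) (d + 1) = (x : ℕ) by omega)⟩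
  · rintro ⟨a, e⟩ hq
    simp only [mem_coe, mem_product, Finset.mem_Icc, mem_range] at hq
    rw [Prod.mk.injEq]
    constructor
    · show min a (d + 1) = a
      omega
    · show min a (d + 1) - 1 - min (a - 1 - e) (d + 1) = e
      omega

lemma good_card {d : ℕ} (hd : 2 ≤ d) :
    (Good (d + 2)).card + 2 * (IP d).card + 2 = 2 ^ (d + 2) := by
  have hGood : Good (d + 2) = (Mid (d + 2)).filter (fun S => Cond1 S ∧ Cond2 S) := by
    ext S
    simp only [Good, Mid, mem_filter, mem_univ, true_and, filter_filter]
    tauto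
  have e1 := card_filter_add_card_filter_not (s := Mid (d + 2))
    (p := fun S => Cond1 S ∧ Cond2 S)
  beta_reduce at e1
  rw [← hGood] at e1
  have hU : (Mid (d + 2)).filter (fun S => ¬ (Cond1 S ∧ Cond2 S)) =
      (Mid (d + 2)).filter (fun S => ¬ Cond1 S) ∪
        (Mid (d + 2)).filter (fun S => ¬ Cond2 S) := by
    ext S
    simp only [mem_filter, mem_union]
    tauto
  have hI : ((Mid (d + 2)).filter (fun S => ¬ Cond1 S)) ∩
      ((Mid (d + 2)).filter (fun S => ¬ Cond2 S)) =
      (Mid (d + 2)).filter (fun S => ¬ Cond1 S ∧ ¬ Cond2 S) := by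
    ext S
    simp only [mem_filter, mem_inter]
    tauto
  have e2 := card_union_add_card_inter ((Mid (d + 2)).filter (fun S => ¬ Cond1 S))
    ((Mid (d + 2)).filter (fun S => ¬ Cond2 S))
  rw [hI] at e2
  rw [hU] at e1
  have hB1 : ((Mid (d + 2)).filter (fun S => ¬ Cond1 S)).card = (P1 (d + 2)).card := by
    rw [badC1_eq, card_image_of_injOn (psi1_injOn.mono ?_)]
    intro q hq
    exact (mem_P1.1 hq).2.2
  have hB2 : ((Mid (d + 2)).filter (fun S => ¬ Cond2 S)).card = (P2 (d + 2)).card := by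
    rw [badC2_eq (by omega), card_image_of_injOn (psi2_injOn.mono ?_)]
    intro q hq
    exact (mem_P2.1 hq).2.2
  have hB3 : ((Mid (d + 2)).filter (fun S => ¬ Cond1 S ∧ ¬ Cond2 S)).card =
      (P3 (d + 2)).card := by
    rw [badC12_eq, card_image_of_injOn (psi1_injOn.mono ?_)]
    intro q hq
    have h5 := mem_P3.1 hq
    simp only [Set.mem_setOf_eq]
    omega
  have hmid := mid_card (n := d + 2) (by omega)
  have h1 := P1_card hd
  have h2 := IP_split1 hd
  have h3 := P2_card hd
  have h4 := IP_split2 hd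
  have h5 := P3_card hd
  omega

lemma rhs_card {d : ℕ} (hd : 2 ≤ d) :
    {s : Finset ℕ | s ⊆ Finset.Icc 1 (d + 1) ∧ s.Nonempty ∧
      ¬ ∃ a b : ℕ, s = Finset.Icc a b}.ncard + (IP d).card + 1 = 2 ^ (d + 1) := by
  have hset : {s : Finset ℕ | s ⊆ Finset.Icc 1 (d + 1) ∧ s.Nonempty ∧
      ¬ ∃ a b : ℕ, s = Finset.Icc a b} = ↑((Finset.Icc 1 (d + 1)).powerset.filter
        (fun s => s.Nonempty ∧ ¬ ∃ a b : ℕ, s = Finset.Icc a b)) := by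
    ext s
    simp only [Set.mem_setOf_eq, mem_coe, mem_filter, mem_powerset]
  rw [hset, Set.ncard_coe_finset]
  have e1 := card_filter_add_card_filter_not (s := (Finset.Icc 1 (d + 1)).powerset)
    (p := fun s => s.Nonempty ∧ ¬ ∃ a b : ℕ, s = Finset.Icc a b)
  beta_reduce at e1
  have hQ : (Finset.Icc 1 (d + 1)).powerset.filter
      (fun s => ¬ (s.Nonempty ∧ ¬ ∃ a b : ℕ, s = Finset.Icc a b)) =
      insert ∅ ((IP d).image (fun p => Finset.Icc p.1 p.2)) := by
    ext s
    simp only [mem_filter, mem_powerset, mem_insert, mem_image, not_and, not_not]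
    constructor
    · rintro ⟨hsub, hcon⟩
      rcases s.eq_empty_or_nonempty with rfl | hne
      · exact Or.inl rfl
      · obtain ⟨a, b, rfl⟩ := hcon hne
        have hab : a ≤ b := Finset.nonempty_Icc.1 hne
        have haM : a ∈ Finset.Icc 1 (d + 1) := hsub (Finset.mem_Icc.2 ⟨le_refl a, hab⟩)
        have hbM : b ∈ Finset.Icc 1 (d + 1) := hsub (Finset.mem_Icc.2 ⟨hab, le_refl b⟩)
        rw [Finset.mem_Icc] at haM hbM
        refine Or.inr ⟨(a, b), ?_, rfl⟩
        simp only [IP, mem_filter, mem_product, Finset.mem_Icc]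
        exact ⟨⟨haM, hbM⟩, hab⟩
    · rintro (rfl | ⟨⟨a, b⟩, hab, rfl⟩)
      · exact ⟨empty_subset _, fun h => absurd h (by simp)⟩
      · simp only [IP, mem_filter, mem_product, Finset.mem_Icc] at hab
        exact ⟨Finset.Icc_subset_Icc (by omega) (by omega), fun h => ⟨a, b, rfl⟩⟩
  have hempty : ∅ ∉ (IP d).image (fun p : ℕ × ℕ => Finset.Icc p.1 p.2) := by
    rw [mem_image]
    rintro ⟨⟨a, b⟩, hab, h⟩
    simp only [IP, mem_filter, mem_product, Finset.mem_Icc] at hab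
    exact (Finset.nonempty_Icc.2 hab.2).ne_empty h
  have hinj : Set.InjOn (fun p : ℕ × ℕ => Finset.Icc p.1 p.2) ↑(IP d) := by
    rintro ⟨a, b⟩ ha ⟨a', b'⟩ hb heq
    simp only [mem_coe, IP, mem_filter, mem_product, Finset.mem_Icc] at ha hb
    simp only at heq
    have h1 : a ∈ Finset.Icc a' b' := by rw [← heq]; exact Finset.mem_Icc.2 ⟨le_refl _, ha.2⟩
    have h2 : a' ∈ Finset.Icc a b := by rw [heq]; exact Finset.mem_Icc.2 ⟨le_refl _, hb.2⟩
    have h3 : b ∈ Finset.Icc a' b' := by rw [← heq]; exact Finset.mem_Icc.2 ⟨ha.2, le_refl _⟩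
    have h4 : b' ∈ Finset.Icc a b := by rw [heq]; exact Finset.mem_Icc.2 ⟨hb.2, le_refl _⟩
    rw [Finset.mem_Icc] at h1 h2 h3 h4
    rw [Prod.mk.injEq]
    omega
  rw [hQ, card_insert_of_notMem hempty, card_image_of_injOn hinj, card_powerset,
    Nat.card_Icc] at e1
  have hexp : d + 1 + 1 - 1 = d + 1 := by omega
  rw [hexp] at e1
  omega

end MinPerm9

/-- For `d ≥ 2`, the number of minimal permutations with `d` descents of size `d + 2`
is exactly twice the number of non-interval subsets of `{1, 2, …, d + 1}` (non-empty
subsets that are not intervals of consecutive integers). -/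
theorem card_minimal_eq_twice_card_non_interval (d : ℕ) (hd : 2 ≤ d) :
    {σ : Equiv.Perm (Fin (d + 2)) | MinimalWithDescents d σ}.ncard =
      2 * {s : Finset ℕ | s ⊆ Finset.Icc 1 (d + 1) ∧ s.Nonempty ∧
        ¬ ∃ a b : ℕ, s = Finset.Icc a b}.ncard := by
  have hL := MinPerm6.lhs_ncard hd
  have hG := MinPerm9.good_card hd
  have hR := MinPerm9.rhs_card hd
  have hpow : 2 ^ (d + 2) = 2 * 2 ^ (d + 1) := by ring
  omega
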